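/- Let L₁ and L₂ be two axes of symmetry of a convex body K ⊂ ℝ³ with L₁ ∩ L₂ ≠ ∅. If the angle between L₁ and L₂ is an irrational multiple of π, then the set of lines obtained by iteratively reflecting L₁ and L₂ in each other (T₁ = L₁, T₂ = L₂, T_k = R_{T_{k−1}}(T_{k−2})) is dense in the pencil of all lines through L₁ ∩ L₂ in the plane spanned by L₁ and L₂, and every line in this pencil is an axis of symmetry of K. -/

import Mathlib

open Metric Set Filter

/-- Rotation by π about the line through `a` with (unit) direction `u`
(in the plane, this is the reflection across that line). -/
noncomputable def lineRefl {d : ℕ} (a u x : EuclideanSpace ℝ (Fin d)) :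
    EuclideanSpace ℝ (Fin d) :=
  (2:ℝ) • a - x + ((2:ℝ) * (inner ℝ (x - a) u : ℝ)) • u

/-- A convex body: compact, convex, nonempty interior. -/
def IsConvexBody {d : ℕ} (K : Set (EuclideanSpace ℝ (Fin d))) : Prop :=
  IsCompact K ∧ Convex ℝ K ∧ (interior K).Nonempty

/-- Central symmetry with centre `o`. -/
def CentSym {d : ℕ} (K : Set (EuclideanSpace ℝ (Fin d)))
    (o : EuclideanSpace ℝ (Fin d)) : Prop :=
  ∀ x, x ∈ K ↔ (2:ℝ) • o - x ∈ K

/-- The line through `a` with direction `u` is an axis of symmetry of `K`. -/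
def IsAxisOfSym {d : ℕ} (K : Set (EuclideanSpace ℝ (Fin d)))
    (a u : EuclideanSpace ℝ (Fin d)) : Prop :=
  lineRefl a u '' K = K

/-- `K` is a body of revolution with axis the line through `a` with direction `u`:
every isometry fixing the axis pointwise maps `K` onto itself. -/
def IsRevBody {d : ℕ} (K : Set (EuclideanSpace ℝ (Fin d)))
    (a u : EuclideanSpace ℝ (Fin d)) : Prop :=
  ∀ f : EuclideanSpace ℝ (Fin d) ≃ᵢ EuclideanSpace ℝ (Fin d),
    (∀ t : ℝ, f (a + t • u) = a + t • u) → f '' K = K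

/-- Orthogonal projection onto the hyperplane `u^⊥` (for `u` a unit vector). -/
noncomputable def projHyp {d : ℕ} (u x : EuclideanSpace ℝ (Fin d)) :
    EuclideanSpace ℝ (Fin d) :=
  x - (inner ℝ x u : ℝ) • u

/-- The line through `a` with direction `u`, as a set of points. -/
def lineSet {d : ℕ} (a u : EuclideanSpace ℝ (Fin d)) : Set (EuclideanSpace ℝ (Fin d)) :=
  {x | ∃ t : ℝ, x = a + t • u}

/-! ### Auxiliary lemmas -/

namespace Stmt5Aux

variable {d : ℕ}

lemma lineRefl_neg (a u x : EuclideanSpace ℝ (Fin d)) :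
    lineRefl a (-u) x = lineRefl a u x := by
  simp [lineRefl, inner_neg_right, smul_neg, neg_smul, mul_neg]

lemma inner_lineRefl_sub (a u x : EuclideanSpace ℝ (Fin d)) (hu : ‖u‖ = 1) :
    (inner ℝ (lineRefl a u x - a) u : ℝ) = (inner ℝ (x - a) u : ℝ) := by
  have h : (inner ℝ u u : ℝ) = 1 := real_inner_self_eq_norm_sq u ▸ by rw [hu]; norm_num
  simp only [lineRefl, inner_sub_left, inner_add_left, inner_smul_left, inner_smul_right, h,
    starRingEnd_apply, star_trivial]
  ring

lemma lineRefl_invol (a u x : EuclideanSpace ℝ (Fin d)) (hu : ‖u‖ = 1) :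
    lineRefl a u (lineRefl a u x) = x := by
  rw [lineRefl, inner_lineRefl_sub a u x hu]
  rw [lineRefl]
  module

lemma lineRefl_conj (a u v x : EuclideanSpace ℝ (Fin d)) (hv : ‖v‖ = 1) :
    lineRefl a v (lineRefl a u (lineRefl a v x)) =
      lineRefl a (((2:ℝ) * (inner ℝ u v : ℝ)) • v - u) x := by
  have h : (inner ℝ v v : ℝ) = 1 := real_inner_self_eq_norm_sq v ▸ by rw [hv]; norm_num
  simp only [lineRefl, inner_sub_left, inner_add_left, inner_smul_left, inner_smul_right,
    inner_sub_right, h, starRingEnd_apply, star_trivial]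
  match_scalars <;> ring_nf <;> rw [real_inner_comm v u] <;> ring

/-- The unit vector at angle `t` in the plane spanned by `u` and `v`. -/
noncomputable def eDir (u v : EuclideanSpace ℝ (Fin d)) (θ : ℝ) (t : ℝ) :
    EuclideanSpace ℝ (Fin d) :=
  Real.cos t • u + (Real.sin t / Real.sin θ) • (v - Real.cos θ • u)

variable {u v : EuclideanSpace ℝ (Fin d)} {θ : ℝ}

lemma inner_eDir (hu : ‖u‖ = 1) (hv : ‖v‖ = 1) (hθ : 0 < θ) (hθπ : θ < Real.pi)
    (hcos : Real.cos θ = (inner ℝ u v : ℝ)) (t t' : ℝ) :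
    (inner ℝ (eDir u v θ t) (eDir u v θ t') : ℝ) = Real.cos (t - t') := by
  have huu : (inner ℝ u u : ℝ) = 1 := real_inner_self_eq_norm_sq u ▸ by rw [hu]; norm_num
  have hvv : (inner ℝ v v : ℝ) = 1 := real_inner_self_eq_norm_sq v ▸ by rw [hv]; norm_num
  have hvu : (inner ℝ v u : ℝ) = Real.cos θ := by rw [real_inner_comm]; exact hcos.symm
  have hs : Real.sin θ ≠ 0 := (Real.sin_pos_of_pos_of_lt_pi hθ hθπ).ne'
  have hs2 : Real.sin θ ^ 2 = 1 - Real.cos θ ^ 2 := Real.sin_sq θ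
  simp only [eDir, inner_add_left, inner_add_right, inner_smul_left, inner_smul_right,
    inner_sub_left, inner_sub_right, huu, hvv, hvu, ← hcos, starRingEnd_apply, star_trivial]
  rw [Real.cos_sub]
  field_simp
  linear_combination (-(Real.sin t * Real.sin t')) * hs2

lemma norm_eDir (hu : ‖u‖ = 1) (hv : ‖v‖ = 1) (hθ : 0 < θ) (hθπ : θ < Real.pi)
    (hcos : Real.cos θ = (inner ℝ u v : ℝ)) (t : ℝ) : ‖eDir u v θ t‖ = 1 := by
  have h := inner_eDir hu hv hθ hθπ hcos t t
  rw [sub_self, Real.cos_zero, real_inner_self_eq_norm_sq] at h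
  nlinarith [norm_nonneg (eDir u v θ t)]

lemma eDir_rec (t : ℝ) :
    ((2:ℝ) * Real.cos θ) • eDir u v θ (t + θ) - eDir u v θ t = eDir u v θ (t + 2*θ) := by
  have h2c := Real.cos_sub (t+θ) θ; rw [add_sub_cancel_right] at h2c
  have h2s := Real.sin_sub (t+θ) θ; rw [add_sub_cancel_right] at h2s
  have hc : Real.cos (t+2*θ) = 2*Real.cos θ*Real.cos (t+θ) - Real.cos t := by
    rw [show t+2*θ = (t+θ)+θ by ring, Real.cos_add]; linear_combination h2c
  have hsn : Real.sin (t+2*θ) = 2*Real.cos θ*Real.sin (t+θ) - Real.sin t := by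
    rw [show t+2*θ = (t+θ)+θ by ring, Real.sin_add]; linear_combination h2s
  simp only [eDir]
  match_scalars
  · linear_combination (-1) * hc + (Real.cos θ/Real.sin θ) * hsn
  · linear_combination (-1/Real.sin θ) * hsn

lemma eDir_congr {t t' : ℝ} (h1 : Real.cos t = Real.cos t') (h2 : Real.sin t = Real.sin t') :
    eDir u v θ t = eDir u v θ t' := by rw [eDir, eDir, h1, h2]

lemma eDir_neg_pi (t : ℝ) : eDir u v θ (t + Real.pi) = - eDir u v θ t := by
  simp only [eDir, Real.cos_add, Real.sin_add, Real.cos_pi, Real.sin_pi]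
  match_scalars <;> ring

lemma eDir_zero : eDir u v θ 0 = u := by simp [eDir]

lemma eDir_theta (hθ : 0 < θ) (hθπ : θ < Real.pi) : eDir u v θ θ = v := by
  have hs : Real.sin θ ≠ 0 := (Real.sin_pos_of_pos_of_lt_pi hθ hθπ).ne'
  rw [eDir, div_self hs]
  match_scalars <;> ring

lemma eDir_int_pi (t : ℝ) (m : ℤ) :
    eDir u v θ (t + m * Real.pi) = eDir u v θ t ∨
    eDir u v θ (t + m * Real.pi) = - eDir u v θ t := by
  rcases Int.even_or_odd m with ⟨q, hq⟩ | ⟨q, hq⟩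
  · left
    have harg : t + (m : ℝ) * Real.pi = t + q * (2 * Real.pi) := by rw [hq]; push_cast; ring
    rw [harg]
    exact eDir_congr (Real.cos_add_int_mul_two_pi t q) (Real.sin_add_int_mul_two_pi t q)
  · right
    have harg : t + (m : ℝ) * Real.pi = (t + Real.pi) + q * (2 * Real.pi) := by
      rw [hq]; push_cast; ring
    rw [harg,
      eDir_congr (Real.cos_add_int_mul_two_pi (t + Real.pi) q)
        (Real.sin_add_int_mul_two_pi (t + Real.pi) q)]
    exact eDir_neg_pi t

lemma inner_comb (hu : ‖u‖ = 1) (hv : ‖v‖ = 1)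
    (hcos : Real.cos θ = (inner ℝ u v : ℝ)) (α β α' β' : ℝ) :
    (inner ℝ (α • u + β • (v - Real.cos θ • u)) (α' • u + β' • (v - Real.cos θ • u)) : ℝ)
      = α * α' + β * β' * Real.sin θ ^ 2 := by
  have huu : (inner ℝ u u : ℝ) = 1 := real_inner_self_eq_norm_sq u ▸ by rw [hu]; norm_num
  have hvv : (inner ℝ v v : ℝ) = 1 := real_inner_self_eq_norm_sq v ▸ by rw [hv]; norm_num
  have hvu : (inner ℝ v u : ℝ) = Real.cos θ := by rw [real_inner_comm]; exact hcos.symm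
  have hs2 : Real.sin θ ^ 2 = 1 - Real.cos θ ^ 2 := Real.sin_sq θ
  simp only [inner_add_left, inner_add_right, inner_smul_left, inner_smul_right,
    inner_sub_left, inner_sub_right, huu, hvv, hvu, ← hcos, starRingEnd_apply, star_trivial]
  linear_combination (-(β * β')) * hs2

lemma dense_natSG (θ : ℝ) (hirr : ∀ q : ℚ, θ ≠ (q : ℝ) * Real.pi) :
    Dense {x : ℝ | ∃ (k : ℕ) (m : ℤ), x = (k : ℝ) * θ + (m : ℝ) * Real.pi} := by
  have hπ : (0:ℝ) < Real.pi := Real.pi_pos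
  have hG : Dense ((AddSubgroup.closure ({θ, Real.pi} : Set ℝ) : AddSubgroup ℝ) : Set ℝ) := by
    rcases AddSubgroup.dense_or_cyclic (AddSubgroup.closure ({θ, Real.pi} : Set ℝ)) with h | ⟨g, hg⟩
    · exact h
    · exfalso
      have hθG : θ ∈ AddSubgroup.closure ({θ, Real.pi} : Set ℝ) :=
        AddSubgroup.subset_closure (by simp)
      have hπG : Real.pi ∈ AddSubgroup.closure ({θ, Real.pi} : Set ℝ) :=
        AddSubgroup.subset_closure (by simp)
      rw [hg, AddSubgroup.mem_closure_singleton] at hθG hπG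
      obtain ⟨p, hp⟩ := hθG
      obtain ⟨q, hq⟩ := hπG
      have hq0 : q ≠ 0 := by rintro rfl; simp at hq; exact hπ.ne' hq.symm
      apply hirr ((p : ℚ) / (q : ℚ))
      have : (q:ℝ) ≠ 0 := Int.cast_ne_zero.mpr hq0
      rw [zsmul_eq_mul] at hp hq
      push_cast
      rw [div_mul_eq_mul_div, eq_div_iff this, ← hp, ← hq]
      ring
  have hsmall : ∀ ε > 0, ∃ (k : ℕ) (m : ℤ), 0 < |(k : ℝ) * θ + (m : ℝ) * Real.pi| ∧
      |(k : ℝ) * θ + (m : ℝ) * Real.pi| < ε := by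
    intro ε hε
    set ε' := min ε Real.pi with hε'
    have hε'0 : 0 < ε' := lt_min hε hπ
    obtain ⟨g, hgmem, hg1, hg2⟩ : ∃ g ∈ (AddSubgroup.closure ({θ, Real.pi} : Set ℝ) : Set ℝ),
        ε' / 2 < g ∧ g < ε' := by
      obtain ⟨g, hg, hmem⟩ := hG.exists_mem_open isOpen_Ioo
        (Set.nonempty_Ioo.2 (show ε' / 2 < ε' by linarith))
      exact ⟨g, hg, hmem.1, hmem.2⟩
    rw [SetLike.mem_coe, AddSubgroup.mem_closure_pair] at hgmem
    obtain ⟨k', m, hkm⟩ := hgmem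
    rw [zsmul_eq_mul, zsmul_eq_mul] at hkm
    have hgpos : 0 < g := lt_trans (by linarith) hg1
    have hglt : |g| < ε := by rw [abs_of_pos hgpos]; exact hg2.trans_le (min_le_left _ _)
    rcases le_or_gt 0 k' with hk' | hk'
    · refine ⟨k'.toNat, m, ?_, ?_⟩ <;>
        rw [show ((k'.toNat : ℕ) : ℝ) = (k' : ℝ) by
          rw [← Int.cast_natCast (R := ℝ), Int.toNat_of_nonneg hk'] ] <;>
        rw [hkm]
      · exact abs_pos.mpr hgpos.ne'
      · exact hglt
    · refine ⟨(-k').toNat, -m, ?_, ?_⟩ <;>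
        rw [show (((-k').toNat : ℕ) : ℝ) = ((-k' : ℤ) : ℝ) by
          rw [← Int.cast_natCast (R := ℝ), Int.toNat_of_nonneg (by omega)] ] <;>
        rw [show ((-k' : ℤ) : ℝ) * θ + ((-m : ℤ) : ℝ) * Real.pi = -((k':ℝ)*θ + (m:ℝ)*Real.pi) by
          push_cast; ring, hkm, abs_neg]
      · exact abs_pos.mpr hgpos.ne'
      · exact hglt
  rw [Metric.dense_iff]
  intro x r hr
  obtain ⟨k, m, hpos, hlt⟩ := hsmall r hr
  set δ := (k : ℝ) * θ + (m : ℝ) * Real.pi with hδ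
  rcases lt_or_gt_of_ne (abs_pos.mp hpos).symm.symm with hneg | hposδ
  · obtain ⟨M, hM⟩ := exists_int_gt (x / Real.pi)
    have hy : x - (M : ℝ) * Real.pi < 0 := by
      have := (div_lt_iff₀ hπ).mp hM
      linarith
    set y := x - (M : ℝ) * Real.pi with hyd
    have hyδ : 0 < y / δ := div_pos_of_neg_of_neg hy hneg
    set n : ℕ := (⌊y / δ⌋).toNat with hn
    have hncast : (n : ℝ) = (⌊y / δ⌋ : ℝ) := by
      rw [hn, ← Int.cast_natCast (R := ℝ), Int.toNat_of_nonneg (Int.floor_nonneg.mpr hyδ.le)]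
    have h1 : (n : ℝ) ≤ y / δ := hncast ▸ Int.floor_le _
    have h2 : y / δ < n + 1 := hncast ▸ Int.lt_floor_add_one _
    have hb1 : y ≤ (n : ℝ) * δ := by
      have := mul_le_mul_of_nonpos_right h1 hneg.le
      rwa [div_mul_cancel₀ _ hneg.ne] at this
    have hb2 : ((n : ℝ) + 1) * δ < y := by
      have := mul_lt_mul_of_neg_right h2 hneg
      rwa [div_mul_cancel₀ _ hneg.ne] at this
    refine ⟨(n * k : ℕ) * θ + ((n * m + M : ℤ) : ℝ) * Real.pi, ?_, ⟨n * k, n * m + M, rfl⟩⟩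
    rw [Metric.mem_ball, Real.dist_eq]
    have habs : |δ| = -δ := abs_of_neg hneg
    have key : (n * k : ℕ) * θ + ((n * m + M : ℤ) : ℝ) * Real.pi - x = (n:ℝ)*δ - y := by
      push_cast; rw [hδ, hyd]; ring
    rw [key, abs_of_nonneg (by linarith)]
    rw [habs] at hlt
    nlinarith
  · obtain ⟨M, hM⟩ := exists_int_lt (x / Real.pi)
    have hy : 0 < x - (M : ℝ) * Real.pi := by
      have := (lt_div_iff₀ hπ).mp hM
      linarith
    set y := x - (M : ℝ) * Real.pi with hyd
    have hyδ : 0 < y / δ := div_pos hy hposδ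
    set n : ℕ := (⌊y / δ⌋).toNat with hn
    have hncast : (n : ℝ) = (⌊y / δ⌋ : ℝ) := by
      rw [hn, ← Int.cast_natCast (R := ℝ), Int.toNat_of_nonneg (Int.floor_nonneg.mpr hyδ.le)]
    have h1 : (n : ℝ) ≤ y / δ := hncast ▸ Int.floor_le _
    have h2 : y / δ < n + 1 := hncast ▸ Int.lt_floor_add_one _
    have hb1 : (n : ℝ) * δ ≤ y := by
      have := mul_le_mul_of_nonneg_right h1 hposδ.le
      rwa [div_mul_cancel₀ _ hposδ.ne'] at this
    have hb2 : y < ((n : ℝ) + 1) * δ := by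
      have := mul_lt_mul_of_pos_right h2 hposδ
      rwa [div_mul_cancel₀ _ hposδ.ne'] at this
    refine ⟨(n * k : ℕ) * θ + ((n * m + M : ℤ) : ℝ) * Real.pi, ?_, ⟨n * k, n * m + M, rfl⟩⟩
    rw [Metric.mem_ball, Real.dist_eq]
    have habs : |δ| = δ := abs_of_pos hposδ
    have key : (n * k : ℕ) * θ + ((n * m + M : ℤ) : ℝ) * Real.pi - x = (n:ℝ)*δ - y := by
      push_cast; rw [hδ, hyd]; ring
    rw [key, abs_of_nonpos (by linarith)]
    rw [habs] at hlt
    nlinarith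

end Stmt5Aux

open Stmt5Aux in
set_option maxHeartbeats 1000000 in
theorem stmt_5 (K : Set (EuclideanSpace ℝ (Fin 3))) (hK : IsConvexBody K)
    (a u v : EuclideanSpace ℝ (Fin 3)) (hu : ‖u‖ = 1) (hv : ‖v‖ = 1)
    (hax₁ : IsAxisOfSym K a u) (hax₂ : IsAxisOfSym K a v)
    (θ : ℝ) (hθ : 0 < θ) (hθπ : θ < Real.pi)
    (hcos : Real.cos θ = (inner ℝ u v : ℝ))
    (hirr : ∀ q : ℚ, θ ≠ (q : ℝ) * Real.pi)
    (dvec : ℕ → EuclideanSpace ℝ (Fin 3))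
    (hd0 : dvec 0 = u) (hd1 : dvec 1 = v)
    (hdrec : ∀ k, dvec (k + 2) =
      ((2:ℝ) * (inner ℝ (dvec k) (dvec (k + 1)) : ℝ)) • dvec (k + 1) - dvec k) :
    (∀ w : EuclideanSpace ℝ (Fin 3), ‖w‖ = 1 → w ∈ Submodule.span ℝ {u, v} →
        w ∈ closure {w' | ∃ k, w' = dvec k ∨ w' = -dvec k}) ∧
    (∀ w : EuclideanSpace ℝ (Fin 3), ‖w‖ = 1 → w ∈ Submodule.span ℝ {u, v} →
        IsAxisOfSym K a w) := by
  have hspos : 0 < Real.sin θ := Real.sin_pos_of_pos_of_lt_pi hθ hθπ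
  -- the explicit formula for dvec
  have hkey : ∀ k : ℕ, dvec k = eDir u v θ ((k : ℝ) * θ) ∧
      dvec (k+1) = eDir u v θ (((k : ℝ) + 1) * θ) := by
    intro k
    induction k with
    | zero =>
      constructor
      · rw [hd0, Nat.cast_zero, zero_mul, eDir_zero]
      · rw [hd1]
        rw [show ((0:ℕ):ℝ) + 1 = 1 by norm_num, one_mul, eDir_theta hθ hθπ]
    | succ k ih =>
      refine ⟨by rw [ih.2]; congr 1; push_cast; ring, ?_⟩
      have h2 : dvec (k + 2) = eDir u v θ ((k : ℝ) * θ + 2 * θ) := by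
        rw [hdrec k, ih.1, ih.2]
        have hin : (inner ℝ (eDir u v θ ((k:ℝ) * θ)) (eDir u v θ (((k:ℝ)+1) * θ)) : ℝ)
            = Real.cos θ := by
          rw [inner_eDir hu hv hθ hθπ hcos,
            show (k:ℝ) * θ - ((k:ℝ)+1) * θ = -θ by ring, Real.cos_neg]
        rw [hin, show ((k:ℝ)+1) * θ = (k:ℝ) * θ + θ by ring]
        exact eDir_rec ((k:ℝ) * θ)
      rw [show (k + 1 + 1 : ℕ) = k + 2 by ring, h2]
      congr 1
      push_cast; ring
  have hnorm : ∀ k : ℕ, ‖dvec k‖ = 1 := fun k => by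
    rw [(hkey k).1]; exact norm_eDir hu hv hθ hθπ hcos _
  -- every dvec k is an axis of symmetry
  have hax : ∀ k : ℕ, IsAxisOfSym K a (dvec k) ∧ IsAxisOfSym K a (dvec (k+1)) := by
    intro k
    induction k with
    | zero => exact ⟨hd0 ▸ hax₁, hd1 ▸ hax₂⟩
    | succ k ih =>
      refine ⟨ih.2, ?_⟩
      have hfun : lineRefl a (dvec (k+2)) =
          (lineRefl a (dvec (k+1))) ∘ (lineRefl a (dvec k)) ∘ (lineRefl a (dvec (k+1))) := by
        funext x
        rw [hdrec k]
        exact (lineRefl_conj a (dvec k) (dvec (k+1)) x (hnorm (k+1))).symm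
      show lineRefl a (dvec (k+1+1)) '' K = K
      rw [show k + 1 + 1 = k + 2 by ring, hfun, Set.image_comp, Set.image_comp,
        ih.2, ih.1, ih.2]
  -- part 1 : density
  have part1 : ∀ w : EuclideanSpace ℝ (Fin 3), ‖w‖ = 1 → w ∈ Submodule.span ℝ {u, v} →
      w ∈ closure {w' | ∃ k, w' = dvec k ∨ w' = -dvec k} := by
    intro w hw hspan
    obtain ⟨p, q, hpq⟩ := Submodule.mem_span_pair.mp hspan
    have hwrep : w = (p + q * Real.cos θ) • u + q • (v - Real.cos θ • u) := by
      rw [← hpq]; module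
    set α := p + q * Real.cos θ with hα
    have hnorm1 : α ^ 2 + (q * Real.sin θ) ^ 2 = 1 := by
      have h1 : (inner ℝ w w : ℝ) = 1 := by
        rw [real_inner_self_eq_norm_sq, hw]; norm_num
      rw [hwrep, inner_comb hu hv hcos] at h1
      nlinarith [h1]
    set z : ℂ := ⟨α, q * Real.sin θ⟩ with hz
    have hzre : z.re = α := rfl
    have hzim : z.im = q * Real.sin θ := rfl
    have habs : ‖z‖ = 1 := by
      have h2 : ‖z‖ ^ 2 = 1 := by
        rw [Complex.sq_norm, Complex.normSq_apply, hzre, hzim]; nlinarith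
      nlinarith [norm_nonneg z]
    have hz0 : z ≠ 0 := by
      intro h; rw [h] at habs; simp at habs
    set φ := Complex.arg z with hφ
    have hcosφ : Real.cos φ = α := by
      rw [hφ, Complex.cos_arg hz0, habs, hzre, div_one]
    have hsinφ : Real.sin φ = q * Real.sin θ := by
      rw [hφ, Complex.sin_arg, habs, hzim, div_one]
    have hwphi : w = eDir u v θ φ := by
      rw [hwrep, eDir, hcosφ, hsinφ, mul_div_assoc, div_self hspos.ne', mul_one]
    have hD := dense_natSG θ hirr
    have himg : eDir u v θ '' {x : ℝ | ∃ (k : ℕ) (m : ℤ),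
        x = (k : ℝ) * θ + (m : ℝ) * Real.pi} ⊆ {w' | ∃ k, w' = dvec k ∨ w' = -dvec k} := by
      rintro _ ⟨x, ⟨k, m, rfl⟩, rfl⟩
      rcases eDir_int_pi ((k:ℝ) * θ) m with h | h
      · exact ⟨k, Or.inl (by rw [h, (hkey k).1])⟩
      · exact ⟨k, Or.inr (by rw [h, (hkey k).1])⟩
    have hcont : Continuous (eDir u v θ) := by
      unfold eDir
      fun_prop
    have h1 : w ∈ eDir u v θ '' closure {x : ℝ | ∃ (k : ℕ) (m : ℤ),
        x = (k : ℝ) * θ + (m : ℝ) * Real.pi} := ⟨φ, hD φ, hwphi.symm⟩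
    exact closure_mono himg (image_closure_subset_closure_image hcont h1)
  refine ⟨part1, ?_⟩
  -- part 2 : every line of the pencil is an axis of symmetry
  intro w hw hspan
  have hwcl := part1 w hw hspan
  have hKcl : IsClosed K := hK.1.isClosed
  have hsub : lineRefl a w '' K ⊆ K := by
    rintro _ ⟨x, hx, rfl⟩
    have hcontx : Continuous fun w' : EuclideanSpace ℝ (Fin 3) => lineRefl a w' x := by
      unfold lineRefl
      exact continuous_const.add
        ((continuous_const.mul (Continuous.inner continuous_const continuous_id :
          Continuous fun w' : EuclideanSpace ℝ (Fin 3) => (inner ℝ (x - a) w' : ℝ))).smul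
          continuous_id)
    have hSK : (fun w' : EuclideanSpace ℝ (Fin 3) => lineRefl a w' x) ''
        {w' | ∃ k, w' = dvec k ∨ w' = -dvec k} ⊆ K := by
      rintro _ ⟨w', ⟨k, hk | hk⟩, rfl⟩
      · show lineRefl a w' x ∈ K
        rw [hk, ← (hax k).1]; exact Set.mem_image_of_mem _ hx
      · show lineRefl a w' x ∈ K
        rw [hk, lineRefl_neg, ← (hax k).1]; exact Set.mem_image_of_mem _ hx
    have : lineRefl a w x ∈ closure K := by
      have h1 : lineRefl a w x ∈ (fun w' : EuclideanSpace ℝ (Fin 3) => lineRefl a w' x) ''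
          closure {w' | ∃ k, w' = dvec k ∨ w' = -dvec k} := ⟨w, hwcl, rfl⟩
      exact closure_mono hSK (image_closure_subset_closure_image hcontx h1)
    rwa [hKcl.closure_eq] at this
  have hsup : K ⊆ lineRefl a w '' K := by
    intro x hx
    exact ⟨lineRefl a w x, hsub (Set.mem_image_of_mem _ hx), lineRefl_invol a w x hw⟩
  exact Set.Subset.antisymm hsub hsup
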